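/- Quantitative inverse function theorem: Let F : B → B' be a C¹ map between Banach spaces such that DF(0) is an isomorphism with ‖DF(0)x‖ ≥ (1/C_I)‖x‖ for all x, and such that ‖DF(0)x − DF(y)x‖ ≤ C_N ‖x‖·‖y‖ for all x and all y with ‖y‖ < r₁. Then for r ≤ min(r₁, (2 C_I C_N)⁻¹), the ball B_{r/2C_I}(F(0)) is contained in F(B_r(0)). In particular, if additionally ‖F(0)‖ < r/(2C_I), then there exists y with ‖y‖ < r and F(y) = 0. -/

import Mathlib

/-- Quantitative inverse function theorem: if `F : B → B'` is `C¹`, `DF(0)` is an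
isomorphism with injectivity constant `C_I`, and the derivative satisfies the
nonlinear estimate with constant `C_N` on the ball of radius `r₁`, then for
`r ≤ min(r₁, (2C_I C_N)⁻¹)` the ball of radius `r/(2C_I)` around `F(0)` is
contained in `F(B_r(0))`; in particular if `‖F 0‖ < r/(2C_I)` there is a zero
`y` of `F` with `‖y‖ < r`. -/
theorem stmt_7 {B B' : Type*} [NormedAddCommGroup B] [NormedSpace ℝ B]
    [NormedAddCommGroup B'] [NormedSpace ℝ B']
    [CompleteSpace B] [CompleteSpace B']
    (F : B → B') (hF : ContDiff ℝ 1 F)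
    (CI CN r₁ : ℝ) (hCI : 0 < CI) (hCN : 0 < CN) (hr₁ : 0 < r₁)
    (e : B ≃L[ℝ] B') (he : (e : B →L[ℝ] B') = fderiv ℝ F 0)
    (hinj : ∀ x : B, (1 / CI) * ‖x‖ ≤ ‖fderiv ℝ F 0 x‖)
    (hN : ∀ x y : B, ‖y‖ < r₁ →
      ‖fderiv ℝ F 0 x - fderiv ℝ F y x‖ ≤ CN * ‖x‖ * ‖y‖) :
    ∀ r : ℝ, 0 < r → r ≤ min r₁ (2 * CI * CN)⁻¹ →
      Metric.ball (F 0) (r / (2 * CI)) ⊆ F '' Metric.ball 0 r ∧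
      (‖F 0‖ < r / (2 * CI) → ∃ y : B, ‖y‖ < r ∧ F y = 0) := by
  intro r hr hrle
  have hr₁' : r ≤ r₁ := hrle.trans (min_le_left _ _)
  have hrC : r ≤ (2 * CI * CN)⁻¹ := hrle.trans (min_le_right _ _)
  have hdiff : Differentiable ℝ F := hF.differentiable one_ne_zero
  -- operator norm bound on the derivative difference
  have hop : ∀ y : B, ‖y‖ < r₁ → ‖fderiv ℝ F y - (e : B →L[ℝ] B')‖ ≤ CN * ‖y‖ := by
    intro y hy
    apply ContinuousLinearMap.opNorm_le_bound _ (by positivity)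
    intro x
    have h1 := hN x y hy
    have h2 : (fderiv ℝ F y - (e : B →L[ℝ] B')) x = -(fderiv ℝ F 0 x - fderiv ℝ F y x) := by
      rw [he]; simp
    rw [h2, norm_neg]
    calc ‖fderiv ℝ F 0 x - fderiv ℝ F y x‖ ≤ CN * ‖x‖ * ‖y‖ := h1
      _ = CN * ‖y‖ * ‖x‖ := by ring
  -- norm of the inverse
  have hsymm : ‖(e.symm : B' →L[ℝ] B)‖ ≤ CI := by
    apply ContinuousLinearMap.opNorm_le_bound _ hCI.le
    intro z
    have := hinj (e.symm z)
    rw [← he] at this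
    simp only [ContinuousLinearEquiv.coe_coe, ContinuousLinearEquiv.apply_symm_apply] at this
    calc ‖e.symm z‖ = CI * ((1 / CI) * ‖e.symm z‖) := by field_simp
      _ ≤ CI * ‖z‖ := by
          apply mul_le_mul_of_nonneg_left _ hCI.le
          simpa using this
  have key : Metric.ball (F 0) (r / (2 * CI)) ⊆ F '' Metric.ball 0 r := by
    intro z hz
    rw [Metric.mem_ball, dist_eq_norm] at hz
    set d := ‖z - F 0‖ with hd
    rcases eq_or_lt_of_le (norm_nonneg (z - F 0)) with h0 | h0
    · -- z = F 0
      have : z = F 0 := by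
        have := sub_eq_zero.mp (norm_eq_zero.mp h0.symm)
        exact this
      exact ⟨0, Metric.mem_ball_self hr, this.symm⟩
    · -- main case : d > 0
      set ε := 2 * CI * d with hε
      have hε0 : 0 < ε := by positivity
      have hεr : ε < r := by
        have : 2 * CI * d < 2 * CI * (r / (2 * CI)) := by
          apply mul_lt_mul_of_pos_left hz (by positivity)
        calc ε = 2 * CI * d := rfl
          _ < 2 * CI * (r / (2 * CI)) := this
          _ = r := by field_simp
      set c : NNReal := ⟨CN * ε, by positivity⟩ with hc
      have hcoe : (c : ℝ) = CN * ε := rfl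
      -- the approximation property on the closed ball of radius ε
      have happrox : ApproximatesLinearOn F (e : B →L[ℝ] B') (Metric.closedBall (0:B) ε) c := by
        intro x hx y hy
        refine Convex.norm_image_sub_le_of_norm_hasFDerivWithin_le'
          (f' := fun w => fderiv ℝ F w) (fun w _ => (hdiff w).hasFDerivAt.hasFDerivWithinAt)
          (fun w hw => ?_) (convex_closedBall _ _) hy hx
        have hw' : ‖w‖ < r₁ := by
          rw [Metric.mem_closedBall, dist_zero_right] at hw
          exact lt_of_le_of_lt hw (hεr.trans_le hr₁')
        calc ‖fderiv ℝ F w - (e : B →L[ℝ] B')‖ ≤ CN * ‖w‖ := hop w hw'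
          _ ≤ CN * ε := by
              apply mul_le_mul_of_nonneg_left _ hCN.le
              rw [Metric.mem_closedBall, dist_zero_right] at hw
              exact hw
      have hsurj := happrox.surjOn_closedBall_of_nonlinearRightInverse
        e.toNonlinearRightInverse hε0.le (subset_refl _)
      -- estimate the radius
      have hN0 : (0:ℝ) < ‖(e.symm : B' →L[ℝ] B)‖ := by
        rcases eq_or_lt_of_le (norm_nonneg (e.symm : B' →L[ℝ] B)) with h | h
        · exfalso
          have hz0 : z - F 0 ≠ 0 := by
            intro hh; rw [hh, norm_zero] at h0; exact lt_irrefl _ h0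
          have hsm0 : (e.symm : B' →L[ℝ] B) = 0 := by
            rw [← norm_eq_zero]; exact h.symm
          have h1 : e.symm (z - F 0) = 0 := by
            have : (e.symm : B' →L[ℝ] B) (z - F 0) = 0 := by rw [hsm0]; simp
            simpa using this
          have h2 : z - F 0 = 0 := by
            have := congrArg e h1
            simpa using this
          exact hz0 h2
        · exact h
      have hradius : d ≤ ((e.toNonlinearRightInverse.nnnorm : ℝ)⁻¹ - c) * ε := by
        have hnn : (e.toNonlinearRightInverse.nnnorm : ℝ) = ‖(e.symm : B' →L[ℝ] B)‖ := rfl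
        have hinv : CI⁻¹ ≤ (e.toNonlinearRightInverse.nnnorm : ℝ)⁻¹ := by
          rw [hnn]
          exact inv_anti₀ hN0 hsymm
        have hCNε : CN * ε < (2 * CI)⁻¹ := by
          have h1 : CN * ε < CN * r := mul_lt_mul_of_pos_left hεr hCN
          have h2 : CN * r ≤ CN * (2 * CI * CN)⁻¹ := mul_le_mul_of_nonneg_left hrC hCN.le
          have h3 : CN * (2 * CI * CN)⁻¹ = (2 * CI)⁻¹ := by
            field_simp
          linarith
        have : (2 * CI)⁻¹ ≤ (e.toNonlinearRightInverse.nnnorm : ℝ)⁻¹ - c := by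
          rw [hcoe]
          have h1 : (2 * CI)⁻¹ + CN * ε ≤ CI⁻¹ := by
            have : CN * ε ≤ (2 * CI)⁻¹ := hCNε.le
            have h2 : (2 * CI)⁻¹ + (2 * CI)⁻¹ = CI⁻¹ := by
              rw [mul_inv]; ring
            linarith
          linarith [hinv]
        have hdε : (2 * CI)⁻¹ * ε = d := by
          rw [hε]; field_simp
        calc d = (2 * CI)⁻¹ * ε := hdε.symm
          _ ≤ ((e.toNonlinearRightInverse.nnnorm : ℝ)⁻¹ - c) * ε :=
            mul_le_mul_of_nonneg_right this hε0.le
      have hzmem : z ∈ Metric.closedBall (F 0)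
          (((e.toNonlinearRightInverse.nnnorm : ℝ)⁻¹ - c) * ε) := by
        rw [Metric.mem_closedBall, dist_eq_norm]
        exact hradius
      obtain ⟨y, hy, hFy⟩ := hsurj hzmem
      refine ⟨y, ?_, hFy⟩
      rw [Metric.mem_closedBall, dist_zero_right] at hy
      rw [Metric.mem_ball, dist_zero_right]
      exact lt_of_le_of_lt hy hεr
  refine ⟨key, fun hF0 => ?_⟩
  have : (0 : B') ∈ Metric.ball (F 0) (r / (2 * CI)) := by
    rw [Metric.mem_ball, dist_eq_norm]
    simpa using hF0
  obtain ⟨y, hy, hFy⟩ := key this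
  rw [Metric.mem_ball, dist_zero_right] at hy
  exact ⟨y, hy, hFy⟩
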